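/- Let n be a positive integer, and let r, s, l, m, k be integers with r, s > 0, rs = n, lm = nk², and -mr - ls + 2nk = 1. Let r', s', l', m', k' be integers with r', s' > 0 satisfying the analogous equations. Suppose further that mr ≡ m'r' (mod n) and ls ≡ l's' (mod n). If a prime p divides r but not r', then p divides s', and then p divides l, and hence p divides mr + ls, contradicting mr + ls ≡ -1 (mod 2n); consequently every prime dividing r also divides r'. -/
import Mathlib


theorem stmt_9 (n r s l m k r' s' l' m' k' : ℤ) (hn : 0 < n)
    (hr : 0 < r) (hs : 0 < s) (hr' : 0 < r') (hs' : 0 < s')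
    (h1 : r * s = n) (h2 : l * m = n * k ^ 2) (h3 : -(m * r) - l * s + 2 * n * k = 1)
    (h1' : r' * s' = n) (h2' : l' * m' = n * k' ^ 2)
    (h3' : -(m' * r') - l' * s' + 2 * n * k' = 1)
    (hmr : m * r ≡ m' * r' [ZMOD n]) (hls : l * s ≡ l' * s' [ZMOD n]) :
    ∀ p : ℕ, p.Prime → (p : ℤ) ∣ r → (p : ℤ) ∣ r' := by
  intro p hp hpr
  by_contra hpr'
  have hpprime : Prime (p : ℤ) := Nat.prime_iff_prime_int.mp hp
  have hpn : (p : ℤ) ∣ n := h1 ▸ hpr.mul_right s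
  have hps' : (p : ℤ) ∣ s' := by
    have : (p : ℤ) ∣ r' * s' := h1' ▸ hpn
    rcases hpprime.dvd_mul.mp this with h | h
    · exact absurd h hpr'
    · exact h
  have hls' : (p : ℤ) ∣ l * s := by
    have hdvd : (p : ℤ) ∣ l' * s' - l * s := hpn.trans hls.dvd
    have h2 : (p : ℤ) ∣ l' * s' := hps'.mul_left l'
    simpa using h2.sub hdvd
  have hmr' : (p : ℤ) ∣ m * r := hpr.mul_left m
  have : (p : ℤ) ∣ 1 := by
    have h2nk : (p : ℤ) ∣ 2 * n * k := (hpn.mul_left 2).mul_right k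
    have : (1 : ℤ) = 2 * n * k - m * r - l * s := by linarith
    rw [this]
    exact (h2nk.sub hmr').sub hls'
  exact hpprime.not_dvd_one this
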